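/- Let G be a finite group, N a normal subgroup, and χ an irreducible character of G with N ≤ ker χ. Suppose χ = αβ where α and β are irreducible characters of G with coprime determinantal orders in the sense that α(g)/α(1) always has π-number order on Z(α) and β(g)/β(1) always has π'-number order on Z(β). Then N ≤ ker α and N ≤ ker β, so that α and β both factor through G/N. -/

import Mathlib

open Polynomial

lemma aux_root_norm_one {m : Type*} [Fintype m] [DecidableEq m] (M : Matrix m m ℂ)
    (n : ℕ) (hn : 0 < n) (hM : M ^ n = 1) {μ : ℂ} (hμ : μ ∈ M.charpoly.roots) :
    ‖μ‖ = 1 := by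
  have hroot : M.charpoly.eval μ = 0 := Polynomial.isRoot_of_mem_roots hμ
  have hmap : (Matrix.charmatrix M).map (Polynomial.evalRingHom μ) =
      Matrix.diagonal (fun _ : m => μ) - M := by
    ext i j
    by_cases h : i = j
    · subst h; simp [Matrix.charmatrix_apply, Matrix.diagonal]
    · simp [Matrix.charmatrix_apply, Matrix.diagonal, h]
  have hdet : (Matrix.diagonal (fun _ : m => μ) - M).det = 0 := by
    rw [← hmap]
    rw [show M.charmatrix.map ⇑(evalRingHom μ) = (evalRingHom μ).mapMatrix M.charmatrix from rfl,
      ← RingHom.map_det]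
    simpa [Matrix.charpoly] using hroot
  obtain ⟨v, hv, hv0⟩ := (Matrix.exists_mulVec_eq_zero_iff).mpr hdet
  have hMv : M.mulVec v = μ • v := by
    rw [Matrix.sub_mulVec] at hv0
    have hD : (Matrix.diagonal (fun _ : m => μ)).mulVec v = μ • v := by
      funext i
      simp [Matrix.mulVec_diagonal]
    rw [hD] at hv0
    exact (sub_eq_zero.mp hv0).symm
  have hpow : ∀ k : ℕ, (M ^ k).mulVec v = μ ^ k • v := by
    intro k
    induction k with
    | zero => simp
    | succ k ih =>
      rw [pow_succ, ← Matrix.mulVec_mulVec, hMv, Matrix.mulVec_smul, ih,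
        smul_smul, pow_succ]
      ring_nf
  have hμn : μ ^ n = 1 := by
    have h1 := hpow n
    rw [hM] at h1
    simp only [Matrix.one_mulVec] at h1
    obtain ⟨i, hi⟩ := Function.ne_iff.mp hv
    have h2 : μ ^ n * v i = 1 * v i := by
      rw [one_mul]; simpa using (congrFun h1 i).symm
    exact mul_right_cancel₀ (by simpa using hi) h2
  have : ‖μ‖ ^ n = 1 := by
    rw [← norm_pow, hμn, norm_one]
  set x := ‖μ‖ with hx
  have hx0 : 0 ≤ x := norm_nonneg μ
  rcases lt_trichotomy x 1 with h | h | h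
  · exact absurd this (by nlinarith [pow_lt_one₀ hx0 h hn.ne'])
  · exact h
  · exact absurd this (by nlinarith [one_lt_pow₀ h hn.ne'])

lemma aux_abs_trace_le {m : Type*} [Fintype m] [DecidableEq m] (M : Matrix m m ℂ)
    (n : ℕ) (hn : 0 < n) (hM : M ^ n = 1) :
    ‖M.trace‖ ≤ Fintype.card m := by
  rw [Matrix.trace_eq_sum_roots_charpoly]
  have hcard : M.charpoly.roots.card = Fintype.card m := by
    rw [(Polynomial.splits_iff_card_roots).mp (IsAlgClosed.splits M.charpoly),
      Matrix.charpoly_natDegree_eq_dim]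
  calc ‖M.charpoly.roots.sum‖ ≤ (M.charpoly.roots.map (‖·‖)).sum := by
        simpa using norm_multiset_sum_le M.charpoly.roots
    _ = ((M.charpoly.roots.map (fun _ => (1 : ℝ))).sum) := by
        congr 1
        exact Multiset.map_congr rfl fun μ hμ => aux_root_norm_one M n hn hM hμ
    _ = Fintype.card m := by
        simp [Multiset.map_const', hcard]

open FDRep in
lemma aux_char_abs_le {G : Type} [Group G] [Fintype G] (V : FDRep ℂ G) (g : G) :
    ‖V.character g‖ ≤ (Module.finrank ℂ V : ℝ) := by
  classical
  let b := Module.finBasis ℂ V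
  have htr : V.character g = (LinearMap.toMatrix b b (V.ρ g)).trace := by
    rw [FDRep.character, LinearMap.trace_eq_matrix_trace ℂ b]
  have hpow : (LinearMap.toMatrix b b (V.ρ g)) ^ Fintype.card G = 1 := by
    rw [LinearMap.toMatrix_pow, ← map_pow, pow_card_eq_one, map_one,
      LinearMap.toMatrix_one]
  have := aux_abs_trace_le (LinearMap.toMatrix b b (V.ρ g)) (Fintype.card G)
    Fintype.card_pos hpow
  rw [htr]
  simpa using this

open CategoryTheory MonoidalCategory FDRep in
lemma aux_finrank_pos {G : Type} [Group G] (V : FDRep ℂ G) [Simple V] :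
    0 < Module.finrank ℂ V := by
  rcases Nat.eq_zero_or_pos (Module.finrank ℂ V) with h | h
  · exfalso
    have hsub : Subsingleton V := Module.finrank_zero_iff.mp h
    apply CategoryTheory.id_nonzero V
    letI : Subsingleton ((CategoryTheory.forget (FGModuleCat ℂ)).obj V.V) := hsub
    ext v
    exact Subsingleton.elim _ _
  · exact h

open CategoryTheory MonoidalCategory FDRep

/-- If N ⊴ G, χ = αβ irreducible with N ≤ ker χ, where α, β are irreducible with
central values of π-number (resp. π'-number) order, then N ≤ ker α and N ≤ ker β,
so both α and β factor through G/N. -/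
theorem stmt7 (G : Type) [Group G] [Fintype G] (π : Set ℕ)
    (N : Subgroup G) (hN : N.Normal) (V W : FDRep ℂ G)
    (hV : Simple V) (hW : Simple W) (hirr : Simple (V ⊗ W))
    (hker : ∀ n ∈ N, (V ⊗ W).character n = (V ⊗ W).character 1)
    (hα : ∀ g : G, ‖V.character g‖ = (Module.finrank ℂ V : ℝ) →
      ∀ ζ : ℂˣ, (ζ : ℂ) = V.character g / V.character 1 →
        ∀ p : ℕ, p.Prime → p ∣ orderOf ζ → p ∈ π)
    (hβ : ∀ g : G, ‖W.character g‖ = (Module.finrank ℂ W : ℝ) →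
      ∀ ζ : ℂˣ, (ζ : ℂ) = W.character g / W.character 1 →
        ∀ p : ℕ, p.Prime → p ∣ orderOf ζ → p ∉ π) :
    (∀ n ∈ N, V.character n = V.character 1) ∧
      (∀ n ∈ N, W.character n = W.character 1) := by
  haveI := hV
  haveI := hW
  have hA : 0 < Module.finrank ℂ V := aux_finrank_pos V
  have hB : 0 < Module.finrank ℂ W := aux_finrank_pos W
  have hV1 : V.character 1 = (Module.finrank ℂ V : ℂ) := FDRep.char_one V
  have hW1 : W.character 1 = (Module.finrank ℂ W : ℂ) := FDRep.char_one W
  have hV1ne : V.character 1 ≠ 0 := by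
    rw [hV1]; exact_mod_cast Nat.cast_ne_zero.mpr hA.ne'
  have hW1ne : W.character 1 ≠ 0 := by
    rw [hW1]; exact_mod_cast Nat.cast_ne_zero.mpr hB.ne'
  have key : ∀ n ∈ N, V.character n = V.character 1 ∧ W.character n = W.character 1 := by
    intro n hn
    have hprod : V.character n * W.character n = V.character 1 * W.character 1 := by
      have h1 := hker n hn
      rw [FDRep.char_tensor] at h1
      simpa using h1
    set A := (Module.finrank ℂ V : ℝ) with hA_def
    set B := (Module.finrank ℂ W : ℝ) with hB_def
    have ha : ‖V.character n‖ ≤ A := aux_char_abs_le V n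
    have hb : ‖W.character n‖ ≤ B := aux_char_abs_le W n
    have hA' : (0 : ℝ) < A := by rw [hA_def]; exact_mod_cast hA
    have hB' : (0 : ℝ) < B := by rw [hB_def]; exact_mod_cast hB
    have hab : ‖V.character n‖ * ‖W.character n‖ = A * B := by
      rw [← norm_mul, hprod, hV1, hW1, norm_mul]
      simp [hA_def, hB_def, Complex.norm_natCast]
    have ha0 : 0 ≤ ‖V.character n‖ := norm_nonneg _
    have hb0 : 0 ≤ ‖W.character n‖ := norm_nonneg _
    have haA : ‖V.character n‖ = A := by nlinarith
    have hbB : ‖W.character n‖ = B := by nlinarith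
    have hVn0 : V.character n ≠ 0 := by
      intro h
      rw [h, norm_zero] at haA
      linarith
    have hz0 : V.character n / V.character 1 ≠ 0 := div_ne_zero hVn0 hV1ne
    set ζ : ℂˣ := Units.mk0 _ hz0 with hζ_def
    have hζval : (ζ : ℂ) = V.character n / V.character 1 := rfl
    have hπmem := hα n haA ζ hζval
    have hζinv : ((ζ⁻¹ : ℂˣ) : ℂ) = W.character n / W.character 1 := by
      rw [Units.val_inv_eq_inv_val, hζval, inv_div,
        div_eq_div_iff hVn0 hW1ne]
      linear_combination -hprod
    have hπ'mem := hβ n hbB ζ⁻¹ hζinv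
    have horder : orderOf ζ = 1 := by
      by_contra h
      have hp := Nat.minFac_prime h
      have h1 := hπmem _ hp (Nat.minFac_dvd _)
      have h2 := hπ'mem _ hp (by rw [orderOf_inv]; exact Nat.minFac_dvd _)
      exact h2 h1
    have hζ1 : ζ = 1 := orderOf_eq_one_iff.mp horder
    constructor
    · have : V.character n / V.character 1 = 1 := by rw [← hζval, hζ1, Units.val_one]
      exact (div_eq_one_iff_eq hV1ne).mp this
    · have : W.character n / W.character 1 = 1 := by
        rw [← hζinv, hζ1, inv_one, Units.val_one]
      exact (div_eq_one_iff_eq hW1ne).mp this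
  exact ⟨fun n hn => (key n hn).1, fun n hn => (key n hn).2⟩
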